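/- Let E be a countably infinite set, let G be a P-oligomorphic group of permutations of E, and let Ker(G) = {x ∈ E | the G-orbit of x is finite} be the kernel of G. Then the collection of G-invariant setoids on E each of whose equivalence classes is either infinite or contained in Ker(G) is a finite set; it is closed under the lattice operations ⊓ and ⊔ of Setoid E, contains the top setoid as its greatest element, and possesses a least element. -/

import Mathlib

/-- The orbit setoid of a permutation group `G ≤ Perm E` acting on the
`n`-element finite subsets of `E`. -/
def permSetoid {E : Type*} (G : Subgroup (Equiv.Perm E)) (n : ℕ) :
    Setoid {s : Set E // s.Finite ∧ s.ncard = n} where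
  r s t := ∃ g ∈ G, g '' s.1 = t.1
  iseqv := by
    constructor
    · exact fun s => ⟨1, G.one_mem, by simp⟩
    · rintro s t ⟨g, hg, h⟩
      refine ⟨g⁻¹, G.inv_mem hg, ?_⟩
      rw [← h, ← Set.image_comp]
      ext x; simp
    · rintro s t u ⟨g, hg, h⟩ ⟨g', hg', h'⟩
      refine ⟨g' * g, G.mul_mem hg' hg, ?_⟩
      rw [← h', ← h, ← Set.image_comp]
      ext x; simp

/-- A setoid (equivalence relation) on `E` is `G`-invariant — i.e. a block
system for `G` — if its relation is preserved by every element of `G`. -/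
def GInvariant {E : Type*} (G : Subgroup (Equiv.Perm E)) (r : Setoid E) : Prop :=
  ∀ g ∈ G, ∀ x y : E, r.r x y ↔ r.r (g x) (g y)

/-- The profile of a permutation group: the number of orbits of `n`-element
finite subsets. -/
noncomputable def profile {E : Type*} (G : Subgroup (Equiv.Perm E)) (n : ℕ) : ℕ :=
  Nat.card (Quotient (permSetoid G n))

/-- The kernel of a permutation group `G ≤ Perm E`: the set of elements of `E`
whose `G`-orbit is finite. -/
def permKernel {E : Type*} (G : Subgroup (Equiv.Perm E)) : Set E :=
  {x | {y | ∃ g ∈ G, g x = y}.Finite}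

/-- The collection of `G`-invariant setoids on `E` each of whose classes is
infinite or contained in the kernel of `G`. -/
def infiniteBlockSystems {E : Type*} (G : Subgroup (Equiv.Perm E)) : Set (Setoid E) :=
  {r | GInvariant G r ∧
    ∀ x : E, {y | r.r x y}.Infinite ∨ {y | r.r x y} ⊆ permKernel G}

section Aux
variable {E : Type*} {G : Subgroup (Equiv.Perm E)}

/-- the class of `a` -/
def cls (u : Setoid E) (a : E) : Set E := {y | u.r a y}

lemma mem_cls_self (u : Setoid E) (a : E) : a ∈ cls u a := u.refl' a

lemma cls_eq_of_rel {u : Setoid E} {a b : E} (h : u.r a b) : cls u a = cls u b :=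
  Set.ext fun y => ⟨fun h' => u.trans' (u.symm' h) h', fun h' => u.trans' h h'⟩

lemma rel_of_mem_cls {u : Setoid E} {a b : E} (h : b ∈ cls u a) : u.r a b := h

lemma cls_eq_of_mem_inter {u : Setoid E} {a b w : E} (ha : w ∈ cls u a) (hb : w ∈ cls u b) :
    cls u a = cls u b := (cls_eq_of_rel ha).trans (cls_eq_of_rel hb).symm

lemma cls_image {u : Setoid E} (hu : GInvariant G u) {g : Equiv.Perm E} (hg : g ∈ G) (x : E) :
    g '' cls u x = cls u (g x) := by
  ext z
  constructor
  · rintro ⟨w, hw, rfl⟩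
    exact (hu g hg x w).mp hw
  · intro hz
    refine ⟨g⁻¹ z, ?_, by simp⟩
    have := (hu g hg x (g⁻¹ z))
    rw [show g (g⁻¹ z) = z from g.apply_symm_apply z] at this
    exact this.mpr hz

end Aux

section Phi
variable {E : Type*} {G : Subgroup (Equiv.Perm E)}

/-- The set of positive cardinalities of intersections of `S` with `u`-classes;
a `G`-orbit invariant when `u` is `G`-invariant. -/
def phi (u : Setoid E) (S : Set E) : Set ℕ :=
  {v | 0 < v ∧ ∃ z : E, (S ∩ cls u z).ncard = v}

lemma inter_cls_image {u : Setoid E} (hu : GInvariant G u) {g : Equiv.Perm E} (hg : g ∈ G)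
    (S : Set E) (z : E) :
    (g '' S) ∩ cls u (g z) = g '' (S ∩ cls u z) := by
  rw [Set.image_inter g.injective, cls_image hu hg]

lemma phi_image {u : Setoid E} (hu : GInvariant G u) {g : Equiv.Perm E} (hg : g ∈ G)
    (S : Set E) : phi u (g '' S) = phi u S := by
  ext v
  simp only [phi, Set.mem_setOf_eq, and_congr_right_iff]
  intro _
  constructor
  · rintro ⟨z, hz⟩
    refine ⟨g⁻¹ z, ?_⟩
    have h1 : (g '' S) ∩ cls u z = g '' (S ∩ cls u (g⁻¹ z)) := by
      have := inter_cls_image hu hg S (g⁻¹ z)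
      simpa using this
    rw [h1, Set.ncard_image_of_injective _ g.injective] at hz
    exact hz
  · rintro ⟨z, hz⟩
    refine ⟨g z, ?_⟩
    rw [inter_cls_image hu hg S z, Set.ncard_image_of_injective _ g.injective]
    exact hz

end Phi

section Count
variable {E : Type*}

private lemma interval_eq {M a b X : ℕ} (h1 : a*M < X) (h2 : X ≤ (a+1)*M)
    (h3 : b*M < X) (h4 : X ≤ (b+1)*M) : a = b := by
  by_contra hne
  rcases Nat.lt_or_ge a b with h | h
  · have : (a+1) * M ≤ b * M := Nat.mul_le_mul_right M h
    omega
  · have h' : b < a := lt_of_le_of_ne h (Ne.symm hne)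
    have : (b+1) * M ≤ a * M := Nat.mul_le_mul_right M h'
    omega

lemma profile_lower (G : Subgroup (Equiv.Perm E))
    (holig : ∀ n, Finite (Quotient (permSetoid G n)))
    {u : Setoid E} (hu : GInvariant G u) (x : ℕ → E)
    (hdis : ∀ i j : ℕ, i ≠ j → ¬ u.r (x i) (x j))
    (hinf : ∀ i, (cls u (x i)).Infinite)
    (c k : ℕ) : ∃ n, c * (n + 1) ^ k < profile G n := by
  classical
  set q : ℕ := (k+2)^2 + 2 with hq
  set M : ℕ := c * q ^ k + 1 with hM
  have hM1 : 1 ≤ M := Nat.le_add_left 1 _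
  set n : ℕ := (k+1)*((k+1)*M) + ((k+1)*M + 1) with hn
  refine ⟨n, ?_⟩
  choose T hTsub hTcard using fun (j : Fin (k+2)) (m : ℕ) =>
    (hinf j).exists_subset_card_eq m
  have hclsdis : ∀ j j' : Fin (k+2), j ≠ j' → ∀ w, w ∈ cls u (x j) → w ∈ cls u (x j') → False := by
    intro j j' hne w hw hw'
    exact hdis j j' (Fin.val_injective.ne hne) (u.trans' hw (u.symm' hw'))
  set A : (Fin (k+1) → Fin M) → Fin (k+1) → ℕ :=
    fun v i => (i : ℕ) * M + (v i : ℕ) + 1 with hA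
  set tl : (Fin (k+1) → Fin M) → ℕ := fun v => n - ∑ i, A v i with htl
  set b : (Fin (k+1) → Fin M) → Fin (k+2) → ℕ :=
    fun v => Fin.lastCases (tl v) (A v) with hb
  have hA_lb : ∀ v (i : Fin (k+1)), (i:ℕ) * M < A v i := by intro v i; simp only [hA]; omega
  have hA_ub : ∀ v (i : Fin (k+1)), A v i ≤ ((i:ℕ)+1) * M := by
    intro v i
    have : (v i : ℕ) < M := (v i).isLt
    simp only [hA, add_mul, one_mul]
    omega
  have hA_ub' : ∀ v (i : Fin (k+1)), A v i ≤ (k+1) * M := by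
    intro v i
    refine le_trans (hA_ub v i) (Nat.mul_le_mul_right M ?_)
    have := i.isLt
    omega
  have hsum_ub : ∀ v, ∑ i, A v i ≤ (k+1)*((k+1)*M) := by
    intro v
    calc ∑ i, A v i ≤ ∑ _i : Fin (k+1), (k+1)*M :=
          Finset.sum_le_sum (fun i _ => hA_ub' v i)
      _ = (k+1)*((k+1)*M) := by simp [Finset.sum_const, Finset.card_univ]
  have htl_lb : ∀ v, (k+1)*M + 1 ≤ tl v := by
    intro v
    have := hsum_ub v
    simp only [htl, hn]
    omega
  have hbsum : ∀ v, ∑ j, b v j = n := by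
    intro v
    rw [Fin.sum_univ_castSucc]
    simp only [hb, Fin.lastCases_castSucc, Fin.lastCases_last]
    have h1 := hsum_ub v
    simp only [htl]
    omega
  have hbpos : ∀ v (j : Fin (k+2)), 0 < b v j := by
    intro v j
    rcases Fin.eq_castSucc_or_eq_last j with ⟨j₀, rfl⟩ | rfl
    · simp [hb, hA]
    · simp only [hb, Fin.lastCases_last]
      have := htl_lb v
      omega
  set S : (Fin (k+1) → Fin M) → Finset E :=
    fun v => Finset.univ.biUnion (fun j => T j (b v j)) with hS
  have hTdis : ∀ v : Fin (k+1) → Fin M, ∀ j ∈ Finset.univ, ∀ j' ∈ Finset.univ, j ≠ j' →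
      Disjoint (T j (b v j)) (T j' (b v j')) := by
    intro v j _ j' _ hne
    rw [Finset.disjoint_left]
    intro a ha ha'
    exact hclsdis j j' hne a (hTsub _ _ ha) (hTsub _ _ ha')
  have hScard : ∀ v, (S v).card = n := by
    intro v
    rw [hS]
    rw [Finset.card_biUnion (hTdis v)]
    simp only [hTcard]
    exact hbsum v
  have hmemS : ∀ v w, w ∈ S v ↔ ∃ j, w ∈ T j (b v j) := by
    intro v w
    simp [hS]
  have hkey1 : ∀ v (j : Fin (k+2)), (↑(S v) : Set E) ∩ cls u (x j) = ↑(T j (b v j)) := by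
    intro v j
    ext w
    simp only [Set.mem_inter_iff, Finset.mem_coe]
    constructor
    · rintro ⟨hwS, hwc⟩
      obtain ⟨j', hj'⟩ := (hmemS v w).mp hwS
      by_cases h : j' = j
      · subst h; exact hj'
      · exact absurd (hclsdis j' j h w (hTsub _ _ hj') hwc) (by simp)
    · intro hw
      exact ⟨(hmemS v w).mpr ⟨j, hw⟩, hTsub _ _ hw⟩
  have hphi : ∀ v, phi u (↑(S v) : Set E) = Set.range (b v) := by
    intro v
    ext m
    constructor
    · rintro ⟨hm, z, hz⟩
      have hne : ((↑(S v) : Set E) ∩ cls u z).Nonempty :=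
        Set.nonempty_of_ncard_ne_zero (by omega)
      obtain ⟨w, hwS, hwz⟩ := hne
      obtain ⟨j, hj⟩ := (hmemS v w).mp hwS
      have hcz : cls u z = cls u (x j) := cls_eq_of_mem_inter hwz (hTsub _ _ hj)
      rw [hcz, hkey1 v j, Set.ncard_coe_finset, hTcard] at hz
      exact ⟨j, hz⟩
    · rintro ⟨j, rfl⟩
      refine ⟨hbpos v j, x j, ?_⟩
      rw [hkey1 v j, Set.ncard_coe_finset, hTcard]
  haveI := holig n
  set F : (Fin (k+1) → Fin M) → Quotient (permSetoid G n) :=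
    fun v => Quotient.mk (permSetoid G n) ⟨(↑(S v) : Set E), (S v).finite_toSet, by
      rw [Set.ncard_coe_finset]; exact hScard v⟩ with hF
  have hFinj : Function.Injective F := by
    intro v v' hvv'
    obtain ⟨g, hg, hgim⟩ := Quotient.exact hvv'
    have hphi_eq : Set.range (b v) = Set.range (b v') := by
      have hgim' : g '' (↑(S v) : Set E) = (↑(S v') : Set E) := hgim
      rw [← hphi v, ← hphi v', ← hgim', phi_image hu hg]
    funext i
    have hmem : A v i ∈ Set.range (b v') := by
      rw [← hphi_eq]
      exact ⟨i.castSucc, by simp [hb]⟩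
    obtain ⟨j, hj⟩ := hmem
    rcases Fin.eq_castSucc_or_eq_last j with ⟨j₀, rfl⟩ | rfl
    · simp only [hb, Fin.lastCases_castSucc] at hj
      have hieq : (j₀ : ℕ) = (i : ℕ) := by
        refine interval_eq (hA_lb v' j₀) (hA_ub v' j₀) ?_ ?_
        · rw [hj]; exact hA_lb v i
        · rw [hj]; exact hA_ub v i
      have hval : (v i : ℕ) = (v' i : ℕ) := by
        have hj₀ : j₀ = i := Fin.ext hieq
        subst hj₀
        simp only [hA] at hj
        omega
      exact Fin.ext hval
    · exfalso
      simp only [hb, Fin.lastCases_last] at hj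
      have h1 := htl_lb v'
      have h2 := hA_ub' v i
      omega
  have hcard : M ^ (k+1) ≤ profile G n := by
    have h := Nat.card_le_card_of_injective F hFinj
    simpa [profile, Nat.card_eq_fintype_card] using h
  have hnq : n + 1 ≤ q * M := by
    simp only [hn, hq]
    nlinarith [hM1]
  calc c * (n+1)^k ≤ c * (q*M)^k := by gcongr
    _ = c * q^k * M^k := by rw [mul_pow, mul_assoc]
    _ < M * M^k := by
        have h1 : c * q^k < M := by omega
        have h2 : 0 < M^k := Nat.pow_pos (by omega)
        exact (Nat.mul_lt_mul_right h2).mpr h1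
    _ = M^(k+1) := by rw [pow_succ, mul_comm]
    _ ≤ profile G n := hcard

end Count

section Meet
variable {E : Type*} {G : Subgroup (Equiv.Perm E)}

lemma aux_contra (holig : ∀ n, Finite (Quotient (permSetoid G n)))
    {c k : ℕ} (hpk : ∀ n, profile G n ≤ c * (n + 1) ^ k)
    {u : Setoid E} (hu : GInvariant G u) (O : Set E)
    (hOcls : ∀ w ∈ O, (cls u w).Infinite)
    (hmany : {A : Set E | ∃ w ∈ O, A = cls u w}.Infinite) : False := by
  classical
  let e := Set.Infinite.natEmbedding _ hmany
  choose w hwO hwcls using fun m : ℕ => (e m).2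
  have hdis : ∀ i j : ℕ, i ≠ j → ¬ u.r (w i) (w j) := by
    intro i j hne hrel
    have h1 : cls u (w i) = cls u (w j) := cls_eq_of_rel hrel
    have h2 : (e i : Set E) = (e j : Set E) := by rw [hwcls i, hwcls j, h1]
    exact hne (e.injective (Subtype.ext h2))
  have hinf : ∀ i, (cls u (w i)).Infinite := fun i => hOcls (w i) (hwO i)
  obtain ⟨n, hn⟩ := profile_lower G holig hu w hdis hinf c k
  exact absurd (hpk n) (by omega)

lemma inf_rel {r s : Setoid E} {x y : E} : (r ⊓ s).r x y ↔ r.r x y ∧ s.r x y := Iff.rfl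

lemma inf_mem (holig : ∀ n, Finite (Quotient (permSetoid G n)))
    {c k : ℕ} (hpk : ∀ n, profile G n ≤ c * (n + 1) ^ k)
    {r s : Setoid E} (hr : r ∈ infiniteBlockSystems G) (hs : s ∈ infiniteBlockSystems G) :
    r ⊓ s ∈ infiniteBlockSystems G := by
  have hinv : GInvariant G (r ⊓ s) := by
    intro g hg x y
    exact and_congr (hr.1 g hg x y) (hs.1 g hg x y)
  refine ⟨hinv, ?_⟩
  intro x
  rcases hr.2 x with hxr | hxr
  · rcases hs.2 x with hxs | hxs
    · -- both infinite
      by_contra hcon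
      push_neg at hcon
      obtain ⟨h1, h2⟩ := hcon
      have hBfin : (cls (r ⊓ s) x).Finite := h1
      obtain ⟨z, hzB, hzK⟩ := Set.not_subset.mp h2
      have hO : ({y | ∃ g ∈ G, g z = y} : Set E).Infinite := hzK
      set O : Set E := {y | ∃ g ∈ G, g z = y} with hOdef
      have hzr : r.r x z := hzB.1
      have hzs : s.r x z := hzB.2
      have hclsBz : cls (r ⊓ s) z = cls (r ⊓ s) x := (cls_eq_of_rel (hzB : (r ⊓ s).r x z)).symm
      -- each w in O has infinite r- and s-classes and finite (r ⊓ s)-class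
      have hOr : ∀ w ∈ O, (cls r w).Infinite := by
        rintro w ⟨g, hg, rfl⟩
        rw [← cls_image hr.1 hg]
        have : (cls r z).Infinite := by
          rw [(cls_eq_of_rel hzr).symm]
          rcases hr.2 x with h | h
          · exact h
          · exact absurd h (by intro hsub; exact hzK (hsub hzr))
        exact this.image (g.injective.injOn)
      have hOs : ∀ w ∈ O, (cls s w).Infinite := by
        rintro w ⟨g, hg, rfl⟩
        rw [← cls_image hs.1 hg]
        have : (cls s z).Infinite := by
          rw [(cls_eq_of_rel hzs).symm]
          rcases hs.2 x with h | h
          · exact h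
          · exact absurd h (by intro hsub; exact hzK (hsub hzs))
        exact this.image (g.injective.injOn)
      have hOt : ∀ w ∈ O, (cls (r ⊓ s) w).Finite := by
        rintro w ⟨g, hg, rfl⟩
        rw [← cls_image hinv hg, hclsBz]
        exact hBfin.image g
      have hdisj : {A : Set E | ∃ w ∈ O, A = cls r w}.Infinite ∨
          {A : Set E | ∃ w ∈ O, A = cls s w}.Infinite := by
        by_contra hno
        push_neg at hno
        obtain ⟨hra, hsa⟩ := hno
        set P : E → Set E × Set E := fun w => (cls r w, cls s w) with hP
        have himg : (P '' O).Finite := by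
          refine Set.Finite.subset (hra.prod hsa) ?_
          rintro p ⟨w, hw, rfl⟩
          exact ⟨⟨w, hw, rfl⟩, ⟨w, hw, rfl⟩⟩
        have hOfin : O.Finite := by
          have hcov : O ⊆ ⋃ p ∈ P '' O, {w ∈ O | P w = p} := by
            intro w hw
            exact Set.mem_biUnion ⟨w, hw, rfl⟩ ⟨hw, rfl⟩
          refine Set.Finite.subset (Set.Finite.biUnion himg ?_) hcov
          rintro p ⟨w₀, hw₀, rfl⟩
          refine Set.Finite.subset (hOt w₀ hw₀) ?_
          rintro w ⟨hw, hPw⟩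
          have h1 : cls r w = cls r w₀ := congrArg Prod.fst hPw
          have h2 : cls s w = cls s w₀ := congrArg Prod.snd hPw
          exact ⟨(h1 ▸ mem_cls_self r w : w ∈ cls r w₀),
                 (h2 ▸ mem_cls_self s w : w ∈ cls s w₀)⟩
        exact hO hOfin
      rcases hdisj with h | h
      · exact aux_contra holig hpk hr.1 O hOr h
      · exact aux_contra holig hpk hs.1 O hOs h
    · right
      exact fun y hy => hxs hy.2
  · right
    exact fun y hy => hxr hy.1

end Meet

section Sup
variable {E : Type*} {G : Subgroup (Equiv.Perm E)}

lemma sup_mem {r s : Setoid E} (hr : r ∈ infiniteBlockSystems G)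
    (hs : s ∈ infiniteBlockSystems G) : r ⊔ s ∈ infiniteBlockSystems G := by
  have key : ∀ g ∈ G, ∀ x y : E, (r ⊔ s).r x y → (r ⊔ s).r (g x) (g y) := by
    intro g hg x y h
    rw [Setoid.sup_eq_eqvGen r s] at h ⊢
    have h' : Relation.EqvGen (fun a b => r a b ∨ s a b) x y := h
    clear h
    show Relation.EqvGen (fun a b => r a b ∨ s a b) (g x) (g y)
    induction h' with
    | rel a b hab =>
        exact Relation.EqvGen.rel _ _ (hab.imp ((hr.1 g hg a b).mp) ((hs.1 g hg a b).mp))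
    | refl a => exact Relation.EqvGen.refl _
    | symm a b _ ih => exact Relation.EqvGen.symm _ _ ih
    | trans a b c _ _ ih1 ih2 => exact Relation.EqvGen.trans _ _ _ ih1 ih2
  have hinv : GInvariant G (r ⊔ s) := by
    intro g hg x y
    refine ⟨key g hg x y, fun h => ?_⟩
    have := key g⁻¹ (G.inv_mem hg) (g x) (g y) h
    simpa using this
  refine ⟨hinv, ?_⟩
  intro x
  by_cases hcase : ∃ y ∈ cls (r ⊔ s) x, (cls r y).Infinite ∨ (cls s y).Infinite
  · left
    obtain ⟨y, hy, hcy⟩ := hcase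
    have hsubr : ∀ (u : Setoid E), u ≤ r ⊔ s → cls u y ⊆ cls (r ⊔ s) x := by
      intro u hu w hw
      exact (r ⊔ s).trans' (hy : (r ⊔ s).r x y) (Setoid.le_def.mp hu hw)
    rcases hcy with h | h
    · exact h.mono (hsubr r le_sup_left)
    · exact h.mono (hsubr s le_sup_right)
  · right
    push_neg at hcase
    intro y hy
    have h1 := (hcase y hy).1
    rcases hr.2 y with h | h
    · exact absurd h (Set.not_infinite.mpr h1)
    · exact h (mem_cls_self r y)

end Sup

section Finiteness
variable {E : Type*} {G : Subgroup (Equiv.Perm E)}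

lemma invariant_finite (G : Subgroup (Equiv.Perm E))
    (holig2 : Finite (Quotient (permSetoid G 2))) :
    {r : Setoid E | GInvariant G r}.Finite := by
  classical
  haveI := holig2
  set Φ : Setoid E → Set (Quotient (permSetoid G 2)) := fun r =>
    {q | ∃ (x y : E) (h : x ≠ y), r.r x y ∧
      q = Quotient.mk (permSetoid G 2)
        ⟨{x, y}, (Set.finite_singleton y).insert x, Set.ncard_pair h⟩} with hΦ
  have hchar : ∀ r : Setoid E, GInvariant G r → ∀ (x y : E) (h : x ≠ y),
      (r.r x y ↔ Quotient.mk (permSetoid G 2)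
        ⟨{x, y}, (Set.finite_singleton y).insert x, Set.ncard_pair h⟩ ∈ Φ r) := by
    intro r hrinv x y h
    constructor
    · intro hxy
      exact ⟨x, y, h, hxy, rfl⟩
    · rintro ⟨x', y', h', hxy', heq⟩
      have hrel := Quotient.exact heq
      obtain ⟨g, hg, hgim⟩ := hrel
      have hgim' : g '' ({x, y} : Set E) = {x', y'} := hgim
      have hpair : ({g x, g y} : Set E) = {x', y'} := by
        rw [← hgim']
        simp [Set.image_insert_eq]
      have hr2 : r.r (g x) (g y) := by
        rcases Set.pair_eq_pair_iff.mp hpair with ⟨hx, hy⟩ | ⟨hx, hy⟩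
        · rw [hx, hy]; exact hxy'
        · rw [hx, hy]; exact r.symm' hxy'
      exact (hrinv g hg x y).mpr hr2
  have hinj : Set.InjOn Φ {r : Setoid E | GInvariant G r} := by
    intro r hrm r' hrm' heq
    ext x y
    by_cases h : x = y
    · subst h
      exact ⟨fun _ => r'.refl' x, fun _ => r.refl' x⟩
    · rw [hchar r hrm x y h, hchar r' hrm' x y h, heq]
  exact Set.Finite.of_finite_image (Set.toFinite _) hinj

end Finiteness

/-- For a P-oligomorphic group `G` of permutations of a countably infinite set
`E`, the collection of `G`-invariant setoids whose classes are infinite or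
contained in the kernel is finite, closed under `⊓` and `⊔`, contains `⊤` as
its greatest element, and has a least element. -/
theorem infiniteBlockSystems_lattice {E : Type*} [Countable E] [Infinite E]
    (G : Subgroup (Equiv.Perm E))
    (holig : ∀ n, Finite (Quotient (permSetoid G n)))
    (hpoly : ∃ c k : ℕ, ∀ n, profile G n ≤ c * (n + 1) ^ k) :
    (infiniteBlockSystems G).Finite ∧
      (∀ r ∈ infiniteBlockSystems G, ∀ s ∈ infiniteBlockSystems G,
        r ⊓ s ∈ infiniteBlockSystems G ∧ r ⊔ s ∈ infiniteBlockSystems G) ∧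
      (⊤ : Setoid E) ∈ infiniteBlockSystems G ∧
      (∀ r ∈ infiniteBlockSystems G, r ≤ (⊤ : Setoid E)) ∧
      (∃ m ∈ infiniteBlockSystems G, ∀ r ∈ infiniteBlockSystems G, m ≤ r) := by
  obtain ⟨c, k, hpk⟩ := hpoly
  have hfin : (infiniteBlockSystems G).Finite :=
    (invariant_finite G (holig 2)).subset (fun r hr => hr.1)
  have htop : (⊤ : Setoid E) ∈ infiniteBlockSystems G := by
    refine ⟨fun g hg x y => iff_of_true trivial trivial, fun x => Or.inl ?_⟩
    have huniv : {y : E | (⊤ : Setoid E).r x y} = Set.univ := by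
      ext y; simp only [Set.mem_setOf_eq, Set.mem_univ, iff_true]; trivial
    rw [huniv]
    exact Set.infinite_univ
  have hclosed : ∀ r ∈ infiniteBlockSystems G, ∀ s ∈ infiniteBlockSystems G,
      r ⊓ s ∈ infiniteBlockSystems G ∧ r ⊔ s ∈ infiniteBlockSystems G :=
    fun r hr s hs => ⟨inf_mem holig hpk hr hs, sup_mem hr hs⟩
  refine ⟨hfin, hclosed, htop, fun r _ => le_top, ?_⟩
  obtain ⟨m, hm, hmin⟩ :=
    Set.Finite.exists_minimal hfin ⟨⊤, htop⟩
  refine ⟨m, hm, fun r hrS => ?_⟩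
  have h1 : m ⊓ r ∈ infiniteBlockSystems G := (hclosed m hm r hrS).1
  have h2 : m = m ⊓ r := le_antisymm (hmin h1 inf_le_left) inf_le_left
  rw [h2]
  exact inf_le_right
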